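/- Let q be a positive integer, d ≥ 2, H a positive real with H ≤ q^(2/(d²+d+2)), and a₁, …, a_d integers. Then there exists a nonzero integer vector (z, w₁, …, w_d) ∈ ℤ^(d+1) and an integer n with n ≡ z (mod q), a_i·n ≡ w_i (mod q) for 1 ≤ i ≤ d, satisfying |z| ≤ q/H and |w_i| ≤ q/H^i for all i. -/

import Mathlib

open MeasureTheory Submodule Finset
open scoped ENNReal

/-- Minkowski's first theorem applied to the multiplier lattice: if
`H ≤ q^(2/(d²+d+2))` then there is a nonzero vector `(z,w₁,…,w_d)` with
`n ≡ z`, `aᵢ n ≡ wᵢ (mod q)` and `|z| ≤ q/H`, `|wᵢ| ≤ q/Hⁱ`. -/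
theorem exists_short_multiplier_vector
    (q : ℕ) (hq : 0 < q) (d : ℕ) (hd : 2 ≤ d) (H : ℝ) (hH : 0 < H)
    (hHq : H ≤ (q : ℝ) ^ ((2 : ℝ) / ((d : ℝ) ^ 2 + d + 2))) (a : ℕ → ℤ) :
    ∃ (z : ℤ) (w : ℕ → ℤ) (n : ℤ),
      ¬(z = 0 ∧ ∀ i, 1 ≤ i → i ≤ d → w i = 0) ∧
      n ≡ z [ZMOD (q : ℤ)] ∧
      (∀ i, 1 ≤ i → i ≤ d → a i * n ≡ w i [ZMOD (q : ℤ)]) ∧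
      |(z : ℝ)| ≤ (q : ℝ) / H ∧
      ∀ i, 1 ≤ i → i ≤ d → |(w i : ℝ)| ≤ (q : ℝ) / H ^ i := by
  classical
  have hq0 : (0 : ℝ) < (q : ℝ) := by exact_mod_cast hq
  -- the integer column of multipliers
  set a' : Fin (d + 1) → ℤ := fun j => if j = 0 then 1 else a j.val with ha'
  -- matrix whose columns are the lattice basis vectors
  set M : Matrix (Fin (d + 1)) (Fin (d + 1)) ℝ :=
    fun j i => if i = 0 then (a' j : ℝ) else if i = j then (q : ℝ) else 0 with hMdef
  have hMdet : M.det = (q : ℝ) ^ d := by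
    have htri : M.BlockTriangular OrderDual.toDual := by
      intro i j hij
      have hji : i < j := hij
      have hj0 : j ≠ 0 := by
        intro h; rw [h] at hji; exact absurd hji (Fin.not_lt_zero i)
      have hji' : j ≠ i := ne_of_gt hji
      simp [hMdef, hj0, hji']
    rw [Matrix.det_of_lowerTriangular M htri, Fin.prod_univ_succ]
    have h00 : M 0 0 = 1 := by simp [hMdef, ha']
    rw [h00, one_mul]
    rw [Finset.prod_congr rfl (fun i _ => show M i.succ i.succ = (q : ℝ) by
      simp [hMdef, Fin.succ_ne_zero i])]
    simp
  have hdetu : IsUnit M.det := by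
    rw [hMdet]; exact isUnit_iff_ne_zero.mpr (pow_ne_zero _ (ne_of_gt hq0))
  let e : (Fin (d + 1) → ℝ) ≃ₗ[ℝ] (Fin (d + 1) → ℝ) :=
    Matrix.toLinearEquiv' M (M.invertibleOfIsUnitDet hdetu)
  let b : Module.Basis (Fin (d + 1)) ℝ (Fin (d + 1) → ℝ) := (Pi.basisFun ℝ (Fin (d + 1))).map e
  have hb : ∀ i j, b i j = M j i := by
    intro i j
    have : b i = M.mulVec (Pi.single i 1) := by
      simp only [b, Module.Basis.map_apply, Pi.basisFun_apply]
      rfl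
    rw [this]
    simp [Matrix.mulVec_single]
  -- the symmetric convex box
  set r : Fin (d + 1) → ℝ := fun i => (q : ℝ) / H ^ (max 1 i.val) with hr
  have hrpos : ∀ i, 0 < r i := fun i => div_pos hq0 (pow_pos hH _)
  set s : Set (Fin (d + 1) → ℝ) := Set.univ.pi fun i => Set.Icc (-(r i)) (r i) with hs
  -- exponent sum
  set S : ℕ := ∑ i : Fin (d + 1), max 1 i.val with hS
  have h2S : 2 * S = d ^ 2 + d + 2 := by
    have h1 : S = 1 + ((∑ i ∈ Finset.range d, i) + d) := by
      rw [hS, Fin.sum_univ_succ]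
      simp only [Fin.val_zero, Fin.val_succ]
      rw [Fin.sum_univ_eq_sum_range (fun i => max 1 (i + 1)) d]
      rw [Finset.sum_congr rfl (fun i (_ : i ∈ Finset.range d) =>
        show max 1 (i + 1) = i + 1 by omega)]
      rw [Finset.sum_add_distrib, Finset.sum_const, Finset.card_range, smul_eq_mul, mul_one]
      norm_num
    have h2 : (∑ i ∈ Finset.range d, i) * 2 = d * (d - 1) := Finset.sum_range_id_mul_two d
    have h3 : d * (d - 1) + d = d * d := by
      obtain ⟨k, rfl⟩ : ∃ k, d = k + 1 := ⟨d - 1, by omega⟩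
      simp only [Nat.add_sub_cancel]
      ring
    have h5 : d ^ 2 = d * d := sq d
    omega
  have hSpos : 0 < S := by omega
  -- the key inequality `H ^ S ≤ q`
  have hkey : H ^ S ≤ (q : ℝ) := by
    have hSne : ((S : ℝ)) ≠ 0 := by positivity
    have hcast : ((d : ℝ) ^ 2 + d + 2) = 2 * (S : ℝ) := by
      have h' : ((2 * S : ℕ) : ℝ) = ((d ^ 2 + d + 2 : ℕ) : ℝ) := Nat.cast_inj.mpr h2S
      push_cast at h'
      linarith
    calc H ^ S = H ^ (S : ℝ) := (Real.rpow_natCast H S).symm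
      _ ≤ ((q : ℝ) ^ ((2 : ℝ) / ((d : ℝ) ^ 2 + d + 2))) ^ (S : ℝ) :=
          Real.rpow_le_rpow hH.le hHq (by positivity)
      _ = (q : ℝ) ^ (((2 : ℝ) / ((d : ℝ) ^ 2 + d + 2)) * (S : ℝ)) :=
          (Real.rpow_mul hq0.le _ _).symm
      _ = (q : ℝ) ^ (1 : ℝ) := by rw [hcast]; congr 1; field_simp
      _ = (q : ℝ) := Real.rpow_one _
  -- volume computation
  have hvols : volume s = ENNReal.ofReal (∏ i : Fin (d + 1), (2 * r i)) := by
    rw [hs, volume_pi_pi, ENNReal.ofReal_prod_of_nonneg fun i _ => by positivity]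
    exact Finset.prod_congr rfl fun i _ => by rw [Real.volume_Icc]; congr 1; ring
  have hprod : ∏ i : Fin (d + 1), (2 * r i) = 2 ^ (d + 1) * ((q : ℝ) ^ (d + 1) / H ^ S) := by
    rw [Finset.prod_mul_distrib, Finset.prod_const]
    simp only [Finset.card_univ, Fintype.card_fin]
    congr 1
    rw [hr]
    rw [Finset.prod_div_distrib, Finset.prod_const, Finset.prod_pow_eq_pow_sum]
    simp [hS]
  have hvol : volume (ZSpan.fundamentalDomain b) * 2 ^ (Module.finrank ℝ (Fin (d + 1) → ℝ))
      ≤ volume s := by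
    rw [ZSpan.volume_fundamentalDomain b]
    have hof : (Matrix.of ⇑b).det = M.det := by
      rw [← Matrix.det_transpose]
      congr 1
      ext i j
      simp [Matrix.of_apply, Matrix.transpose_apply, hb]
    rw [hof, hMdet, abs_of_nonneg (by positivity), hvols, hprod]
    have hfr : Module.finrank ℝ (Fin (d + 1) → ℝ) = d + 1 := by simp
    rw [hfr]
    have h2 : (2 : ℝ≥0∞) ^ (d + 1) = ENNReal.ofReal (2 ^ (d + 1)) := by
      rw [ENNReal.ofReal_pow (by norm_num)]
      norm_num
    rw [h2, ← ENNReal.ofReal_mul (by positivity)]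
    apply ENNReal.ofReal_le_ofReal
    rw [mul_comm]
    apply mul_le_mul_of_nonneg_left _ (by positivity)
    rw [le_div_iff₀ (by positivity : (0:ℝ) < H ^ S)]
    calc (q : ℝ) ^ d * H ^ S ≤ (q : ℝ) ^ d * q :=
          mul_le_mul_of_nonneg_left hkey (by positivity)
      _ = (q : ℝ) ^ (d + 1) := by ring
  -- apply Minkowski
  have hsymm : ∀ x ∈ s, -x ∈ s := by
    intro x hx i _
    have hxi := hx i (Set.mem_univ i)
    simp only [Set.mem_Icc, Pi.neg_apply] at hxi ⊢
    constructor <;> linarith [hxi.1, hxi.2]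
  have hconv : Convex ℝ s := convex_pi fun i _ => convex_Icc _ _
  have hcpt : IsCompact s := isCompact_univ_pi fun i => isCompact_Icc
  haveI : Countable (span ℤ (Set.range ⇑b)).toAddSubgroup :=
    inferInstanceAs (Countable (span ℤ (Set.range ⇑b)))
  obtain ⟨x, hx0, hxs⟩ :=
    exists_ne_zero_mem_lattice_of_measure_mul_two_pow_le_measure
      (ZSpan.isAddFundamentalDomain' b volume) hsymm hconv hcpt hvol
  -- extract integer coordinates
  have hxmem : (x : Fin (d + 1) → ℝ) ∈ span ℤ (Set.range ⇑b) := x.2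
  obtain ⟨c, hc⟩ := (mem_span_range_iff_exists_fun ℤ).mp hxmem
  have hsum : ∀ j : Fin (d + 1), (x : Fin (d + 1) → ℝ) j = ∑ i, (c i : ℝ) * M j i := by
    intro j
    rw [← hc, Finset.sum_apply]
    exact Finset.sum_congr rfl fun i _ => by rw [Pi.smul_apply, hb, zsmul_eq_mul]
  have hx0c : (x : Fin (d + 1) → ℝ) 0 = (c 0 : ℝ) := by
    rw [hsum 0, Finset.sum_eq_single 0 (fun i _ hi => by simp [hMdef, hi]) (by simp)]
    simp [hMdef, ha']
  have hxjc : ∀ j : Fin (d + 1), j ≠ 0 →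
      (x : Fin (d + 1) → ℝ) j = (c 0 : ℝ) * (a j.val : ℝ) + (q : ℝ) * (c j : ℝ) := by
    intro j hj
    rw [hsum j, ← Finset.add_sum_erase _ _ (Finset.mem_univ 0)]
    rw [Finset.sum_eq_single_of_mem j (Finset.mem_erase.mpr ⟨hj, Finset.mem_univ j⟩)
      (fun i hi hij => by
        have hi0 : i ≠ 0 := (Finset.mem_erase.mp hi).1
        simp [hMdef, hi0, hij])]
    simp [hMdef, hj, ha']
    ring
  -- read off the conclusion
  refine ⟨c 0, fun i => c 0 * a i + q * (if h : i < d + 1 then c ⟨i, h⟩ else 0), c 0, ?_, ?_, ?_, ?_, ?_⟩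
  · rintro ⟨hz, hw⟩
    apply hx0
    have hcoe : (x : Fin (d + 1) → ℝ) = 0 := by
      funext j
      by_cases hj : j = 0
      · rw [hj, hx0c, hz]; simp
      · rw [hxjc j hj]
        have h1i : 1 ≤ j.val := by
          rcases Nat.eq_zero_or_pos j.val with h | h
          · exact absurd (Fin.ext h) hj
          · exact h
        have hwj := hw j.val h1i (by omega)
        simp only at hwj
        rw [dif_pos j.isLt, Fin.eta] at hwj
        have hcast : ((c 0 * a j.val + (q : ℤ) * c j : ℤ) : ℝ) = 0 := by rw [hwj]; simp
        push_cast at hcast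
        rw [Pi.zero_apply]
        linarith [hcast]
    exact Subtype.ext hcoe
  · exact Int.ModEq.refl _
  · intro i h1 h2
    show a i * c 0 ≡ c 0 * a i + (q : ℤ) * (if h : i < d + 1 then c ⟨i, h⟩ else 0) [ZMOD (q : ℤ)]
    rw [dif_pos (by omega : i < d + 1)]
    exact Int.modEq_iff_dvd.mpr ⟨c ⟨i, by omega⟩, by ring⟩
  · have hmem := hxs 0 (Set.mem_univ (0 : Fin (d + 1)))
    rw [hx0c] at hmem
    have hr0 : r 0 = (q : ℝ) / H := by simp [hr]
    simp only [Set.mem_Icc] at hmem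
    rw [hr0] at hmem
    exact abs_le.mpr hmem
  · intro i h1 h2
    set j : Fin (d + 1) := ⟨i, by omega⟩ with hj
    have hj0 : j ≠ 0 := by
      intro h
      have := congrArg Fin.val h
      simp [hj] at this
      omega
    have hmem := hxs j (Set.mem_univ j)
    rw [hxjc j hj0] at hmem
    have hval : ((c 0 * a i + (q : ℤ) * (if h : i < d + 1 then c ⟨i, h⟩ else 0) : ℤ) : ℝ)
        = (c 0 : ℝ) * (a j.val : ℝ) + (q : ℝ) * (c j : ℝ) := by
      rw [dif_pos (by omega : i < d + 1)]
      push_cast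
      rfl
    have hrj : r j = (q : ℝ) / H ^ i := by
      simp only [hr, hj]
      congr 2
      omega
    show |((c 0 * a i + (q : ℤ) * (if h : i < d + 1 then c ⟨i, h⟩ else 0) : ℤ) : ℝ)|
      ≤ (q : ℝ) / H ^ i
    rw [hval, ← hrj]
    simp only [Set.mem_Icc] at hmem
    exact abs_le.mpr hmem
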